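/- Let X be an ultranormal Hausdorff space and let (U_α)_{α ∈ A} be a locally finite open cover of X. Then there is a family (P_α)_{α ∈ A} of clopen sets covering X such that P_α ⊆ U_α for each α ∈ A and P_α ∩ P_β = ∅ whenever α ≠ β. -/

import Mathlib

/-- A partition of the space `X` into (nonempty, pairwise disjoint) clopen sets. -/
def IsClopenPartition (X : Type*) [TopologicalSpace X] (P : Set (Set X)) : Prop :=
  (∀ S ∈ P, IsClopen S) ∧ (∀ S ∈ P, S.Nonempty) ∧
    (∀ S ∈ P, ∀ T ∈ P, S ≠ T → S ∩ T = ∅) ∧ ⋃₀ P = Set.univ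

/-- A space is ultraparacompact if every open cover has a refinement that is a
partition of the space into clopen sets. -/
def Ultraparacompact (X : Type*) [TopologicalSpace X] : Prop :=
  ∀ 𝒰 : Set (Set X), (∀ U ∈ 𝒰, IsOpen U) → ⋃₀ 𝒰 = Set.univ →
    ∃ P : Set (Set X), IsClopenPartition X P ∧ ∀ S ∈ P, ∃ U ∈ 𝒰, S ⊆ U

/-- A space is ultranormal if any two disjoint closed sets are separated by a clopen set. -/
def Ultranormal (X : Type*) [TopologicalSpace X] : Prop :=
  ∀ R S : Set X, IsClosed R → IsClosed S → Disjoint R S →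
    ∃ C : Set X, IsClopen C ∧ R ⊆ C ∧ S ∩ C = ∅

/-- A space is zero-dimensional if the clopen sets form a basis for the topology. -/
def ZeroDimensional (X : Type*) [TopologicalSpace X] : Prop :=
  TopologicalSpace.IsTopologicalBasis {s : Set X | IsClopen s}

/-- In an ultranormal Hausdorff space, every locally finite open cover `(U a)` admits a
cover `(P a)` by pairwise disjoint clopen sets with `P a ⊆ U a` for each `a`. -/
theorem ultranormal_locallyFinite_disjoint_shrinking (X : Type*) [TopologicalSpace X]
    [T2Space X] (hX : Ultranormal X) {A : Type*} (U : A → Set X)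
    (hopen : ∀ a, IsOpen (U a)) (hcover : ⋃ a, U a = Set.univ)
    (hlf : LocallyFinite U) :
    ∃ P : A → Set X, (∀ a, IsClopen (P a)) ∧ (⋃ a, P a = Set.univ) ∧
      (∀ a, P a ⊆ U a) ∧ (∀ a b, a ≠ b → P a ∩ P b = ∅) := by
  haveI : NormalSpace X := by
    constructor
    intro s t hs ht hst
    obtain ⟨Cst, hCcl, hsC, htC⟩ := hX s t hs ht hst
    exact ⟨Cst, Cstᶜ, hCcl.isOpen, hCcl.compl.isOpen, hsC,
      fun x hx hxC => Set.eq_empty_iff_forall_notMem.1 htC x ⟨hx, hxC⟩,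
      disjoint_compl_right⟩
  obtain ⟨v, hvU, hvcl, hvsub⟩ :=
    exists_iUnion_eq_closed_subset hopen (fun x => hlf.point_finite x) hcover
  have hCex : ∀ a, ∃ C : Set X, IsClopen C ∧ v a ⊆ C ∧ C ⊆ U a := by
    intro a
    obtain ⟨C, hC, h1, h2⟩ := hX (v a) (U a)ᶜ (hvcl a) (hopen a).isClosed_compl
      (Set.disjoint_compl_right_iff_subset.2 (hvsub a))
    refine ⟨C, hC, h1, fun x hx => by_contra fun hxU =>
      Set.eq_empty_iff_forall_notMem.1 h2 x ⟨hxU, hx⟩⟩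
  choose C hCcl hvC hCU using hCex
  have hClf : LocallyFinite C := hlf.subset hCU
  let r : A → A → Prop := WellOrderingRel
  have hwo : IsWellOrder A r := WellOrderingRel.isWellOrder
  let D : A → Set X := fun a => ⋃ b ∈ {b | r b a}, C b
  have hDcl : ∀ a, IsClopen (D a) := by
    intro a
    constructor
    · have : D a = ⋃ b : {b // r b a}, C b := by
        simp [D, Set.iUnion_subtype]
      rw [this]
      exact (hClf.comp_injective Subtype.val_injective).isClosed_iUnion fun b => (hCcl b).1
    · exact isOpen_biUnion fun b _ => (hCcl b).2
  refine ⟨fun a => C a \ D a, fun a => (hCcl a).diff (hDcl a), ?_, fun a => (Set.diff_subset).trans (hCU a), ?_⟩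
  · apply Set.eq_univ_of_forall
    intro x
    have hne : {a | x ∈ C a}.Nonempty := by
      have hx : x ∈ ⋃ a, v a := hvU ▸ Set.mem_univ x
      obtain ⟨a, ha⟩ := Set.mem_iUnion.1 hx
      exact ⟨a, hvC a ha⟩
    obtain ⟨a, ha, hmin⟩ := hwo.toIsWellFounded.wf.has_min _ hne
    refine Set.mem_iUnion.2 ⟨a, ha, ?_⟩
    intro hxD
    obtain ⟨b, hb, hxb⟩ := Set.mem_iUnion₂.1 hxD
    exact hmin b hxb hb
  · intro a b hab
    rcases trichotomous_of r a b with h | h | h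
    · apply Set.eq_empty_iff_forall_notMem.2
      rintro x ⟨⟨hxa, -⟩, ⟨-, hxD⟩⟩
      exact hxD (Set.mem_iUnion₂.2 ⟨a, h, hxa⟩)
    · exact absurd h hab
    · apply Set.eq_empty_iff_forall_notMem.2
      rintro x ⟨⟨-, hxD⟩, ⟨hxb, -⟩⟩
      exact hxD (Set.mem_iUnion₂.2 ⟨b, h, hxb⟩)
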